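/- arXiv:math/0011249 — 2 statements merged into one kernel-verified Lean document; each statement's English description precedes it below -/
import Mathlib

section
/- Witt extension for the standard symplectic form over Z/pZ: let p be a prime, g a positive integer, let G and G' be linear subspaces of (Z/pZ)^{2g}, and let ψ : G → G' be a linear isomorphism such that (ψ(a), ψ(b))_p = (a, b)_p for all a, b ∈ G, where (.,.)_p is the standard symplectic form on (Z/pZ)^{2g}. Then there exists a linear automorphism Ψ of (Z/pZ)^{2g} preserving the standard symplectic form whose restriction to G equals ψ. -/
open Finset

/-- The matrix of the standard symplectic form: `(e_i, e_j) = δ_{i+j, 2g+1}` for `i < j`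
(with `1`-based indices; here indices are `0`-based, so the condition reads `i + j = 2g - 1`). -/
def sympJ (g : ℕ) (R : Type*) [Ring R] : Matrix (Fin (2 * g)) (Fin (2 * g)) R :=
  fun i j =>
    if (i : ℕ) < (j : ℕ) ∧ (i : ℕ) + (j : ℕ) = 2 * g - 1 then 1
    else if (j : ℕ) < (i : ℕ) ∧ (i : ℕ) + (j : ℕ) = 2 * g - 1 then -1
    else 0

/-- The standard symplectic (bilinear antisymmetric) form on `R^{2g}`. -/
def symp (g : ℕ) (R : Type*) [CommRing R] (x y : Fin (2 * g) → R) : R :=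
  ∑ i, ∑ j, x i * sympJ g R i j * y j

lemma sympJ_antisymm (g : ℕ) (K : Type*) [CommRing K] (i j : Fin (2*g)) :
    sympJ g K j i = - sympJ g K i j := by
  simp only [sympJ]
  split_ifs <;> first | ring1 | (exfalso; omega)

lemma symp_eq_toBilin' (g : ℕ) (K : Type*) [CommRing K] (x y : Fin (2*g) → K) :
    symp g K x y = Matrix.toBilin' (sympJ g K) x y := (Matrix.toBilin'_apply _ _ _).symm

lemma symp_isAlt (g : ℕ) (K : Type*) [CommRing K] : (Matrix.toBilin' (sympJ g K)).IsAlt := by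
  intro x
  rw [Matrix.toBilin'_apply, ← Finset.sum_product']
  refine Finset.sum_ninvolution (fun ij => (ij.2, ij.1)) ?_ ?_ ?_ ?_
  · rintro ⟨i, j⟩
    simp only
    rw [sympJ_antisymm g K i j]
    ring
  · rintro ⟨i, j⟩ hne heq
    exfalso
    have hji : j = i := congrArg Prod.fst heq
    apply hne
    subst hji
    have h0 : sympJ g K j j = 0 := by simp [sympJ]
    simp only [h0]
    ring
  · simp
  · simp

lemma symp_nondeg (g : ℕ) (K : Type*) [Field K] :
    (Matrix.toBilin' (sympJ g K)).Nondegenerate := by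
  refine (LinearMap.IsRefl.nondegenerate_iff_separatingLeft (symp_isAlt g K).isRefl).mpr ?_
  intro x hx
  funext i
  have hi := i.isLt
  have hjlt : 2*g - 1 - (i:ℕ) < 2*g := by omega
  set j : Fin (2*g) := ⟨2*g - 1 - i, hjlt⟩ with hj
  have hij : (i:ℕ) + (j:ℕ) = 2*g - 1 := by simp only [hj]; omega
  have h1 := hx (Pi.single j 1)
  rw [Matrix.toBilin'_apply] at h1
  have h2 : ∀ i', ∑ j', x i' * sympJ g K i' j' * (Pi.single j (1:K) : Fin (2*g) → K) j' = x i' * sympJ g K i' j := by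
    intro i'
    rw [Finset.sum_eq_single j]
    · rw [Pi.single_eq_same, mul_one]
    · intro b _ hb; rw [Pi.single_eq_of_ne hb, mul_zero]
    · simp
  rw [Finset.sum_congr rfl (fun i' _ => h2 i')] at h1
  rw [Finset.sum_eq_single i] at h1
  · have hne : sympJ g K i j ≠ 0 := by
      simp only [sympJ]
      rcases lt_trichotomy (i:ℕ) (j:ℕ) with h|h|h
      · rw [if_pos ⟨h, hij⟩]; exact one_ne_zero
      · omega
      · rw [if_neg (by omega), if_pos ⟨h, hij⟩]
        exact neg_ne_zero.mpr one_ne_zero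
    rcases mul_eq_zero.mp h1 with h|h
    · exact h
    · exact absurd h hne
  · intro b _ hb
    have hbn : ¬ ((b:ℕ) + (j:ℕ) = 2*g - 1) := by
      intro hcon; exact hb (Fin.ext (by omega))
    have h0 : sympJ g K b j = 0 := by
      simp only [sympJ]
      rw [if_neg (fun h => hbn h.2), if_neg (fun h => hbn h.2)]
    rw [h0, mul_zero]
  · simp


section WittAux
open Module Submodule

variable {K V : Type*} [Field K] [AddCommGroup V] [Module K V] [FiniteDimensional K V]

theorem witt_aux (B : LinearMap.BilinForm K V) (halt : B.IsAlt) (hnd : B.Nondegenerate) :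
    ∀ (n : ℕ) (F : V →ₗ.[K] V),
      Module.finrank K V - Module.finrank K F.domain ≤ n →
      Function.Injective F.toFun →
      (∀ a b : F.domain, B (F a) (F b) = B (a : V) (b : V)) →
      ∃ Ψ : V ≃ₗ[K] V, (∀ x y, B (Ψ x) (Ψ y) = B x y) ∧ ∀ x : F.domain, Ψ (x : V) = F x := by
  intro n
  induction n with
  | zero =>
    intro F hle hinj hiso
    have htop : F.domain = ⊤ := by
      apply Submodule.eq_top_of_finrank_eq
      have := Submodule.finrank_le F.domain
      omega
    let e0 : V ≃ₗ[K] F.domain := (LinearEquiv.ofTop F.domain htop).symm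
    let L : V →ₗ[K] V := F.toFun ∘ₗ e0.toLinearMap
    have hLinj : Function.Injective L := by
      intro a b h
      exact e0.injective (hinj h)
    have hLapp : ∀ x, L x = F (e0 x) := fun _ => rfl
    refine ⟨LinearEquiv.ofBijective L ⟨hLinj, LinearMap.injective_iff_surjective.mp hLinj⟩,
      ?_, ?_⟩
    · intro x y
      show B (L x) (L y) = B x y
      rw [hLapp, hLapp, hiso (e0 x) (e0 y)]
      simp [e0]
    · intro x
      show L (x : V) = F x
      rw [hLapp]
      exact congrArg (fun t => F t) (show e0 (x : V) = x from Subtype.ext (by simp [e0]))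
  | succ n ih =>
    intro F hle hinj hiso
    by_cases hsmall : Module.finrank K V - Module.finrank K F.domain ≤ n
    · exact ih F hsmall hinj hiso
    obtain ⟨v, hv⟩ : ∃ v, v ∉ F.domain := by
      by_contra h
      push_neg at h
      have : F.domain = ⊤ := Submodule.eq_top_iff'.mpr h
      rw [this, finrank_top] at hsmall
      omega
    have hfr : Module.finrank K (LinearMap.range F.toFun) = Module.finrank K F.domain :=
      LinearMap.finrank_range_of_inj hinj
    set e : F.domain ≃ₗ[K] LinearMap.range F.toFun := LinearEquiv.ofInjective F.toFun hinj with he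
    -- find w0 with ∀ u, B w0 (F u) = B v u
    obtain ⟨Φ, hΦ⟩ := Subspace.dualRestrict_surjective (W := LinearMap.range F.toFun)
      ((B v).comp ((Submodule.subtype F.domain).comp e.symm.toLinearMap))
    set w0 : V := (B.toDual hnd).symm Φ with hw0def
    have htd : B.toDual hnd w0 = Φ := LinearEquiv.apply_symm_apply _ _
    have hw0 : ∀ u : F.domain, B w0 (F u) = B v u := by
      intro u
      have h2 : B w0 (F u) = Φ (F u) := by
        rw [← htd]
        exact (LinearMap.BilinForm.toDual_def hnd).symm
      have h3 := DFunLike.congr_fun hΦ (e u)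
      simp only [Submodule.dualRestrict_apply, LinearMap.comp_apply,
        LinearEquiv.coe_coe, LinearEquiv.symm_apply_apply, Submodule.coe_subtype] at h3
      rw [h2]
      rw [show ((e u : V)) = F u from LinearEquiv.ofInjective_apply _ _] at h3
      exact h3
    -- key claim
    have hstep : ∃ w, (∀ u : F.domain, B w (F u) = B v u) ∧ w ∉ LinearMap.range F.toFun := by
      by_contra hcon
      push_neg at hcon
      have hw0R : w0 ∈ LinearMap.range F.toFun := hcon w0 hw0
      have hRperp : B.orthogonal (LinearMap.range F.toFun) ≤ LinearMap.range F.toFun := by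
        intro z hz
        have hz' : ∀ u : F.domain, B z (F u) = 0 := fun u =>
          halt.isRefl _ _ (hz (F u) (LinearMap.mem_range_self _ u))
        have hmem : w0 + z ∈ LinearMap.range F.toFun := by
          apply hcon
          intro u
          rw [map_add, LinearMap.add_apply, hz' u, add_zero, hw0 u]
        have := Submodule.sub_mem _ hmem hw0R
        simpa using this
      obtain ⟨u0, hu0⟩ := hw0R
      have hvu : ∀ u : F.domain, B (v - (u0 : V)) u = 0 := by
        intro u
        have hu0' : F u0 = w0 := hu0
        have h4 : B (u0 : V) (u : V) = B v u := by
          rw [← hiso u0 u, hu0']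
          exact hw0 u
        rw [map_sub, LinearMap.sub_apply, h4, sub_self]
      have hvperp : v - (u0 : V) ∈ B.orthogonal F.domain := fun nn hn =>
        halt.isRefl _ _ (hvu ⟨nn, hn⟩)
      have hvnot : v - (u0 : V) ∉ F.domain := by
        intro h
        apply hv
        have := Submodule.add_mem _ h u0.2
        simpa using this
      -- dimension count
      let jmap : (B.orthogonal (LinearMap.range F.toFun)) →ₗ[K] V :=
        (Submodule.subtype F.domain) ∘ₗ e.symm.toLinearMap ∘ₗ Submodule.inclusion hRperp
      have hjapp : ∀ z, jmap z = ((e.symm (Submodule.inclusion hRperp z) : F.domain) : V) :=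
        fun _ => rfl
      have hjinj : Function.Injective jmap := by
        intro z z' hzz
        rw [hjapp, hjapp] at hzz
        exact Submodule.inclusion_injective hRperp
          (e.symm.injective (Subtype.val_injective hzz))
      have hjrange : LinearMap.range jmap ≤ F.domain ⊓ B.orthogonal F.domain := by
        rintro x ⟨z, rfl⟩
        rw [hjapp]
        set u : F.domain := e.symm (Submodule.inclusion hRperp z) with hu
        refine ⟨u.2, ?_⟩
        intro nn hn
        have hFu : F u = ((Submodule.inclusion hRperp z : LinearMap.range F.toFun) : V) := by
          rw [show F u = ((e u : V)) from (LinearEquiv.ofInjective_apply _ _).symm, hu]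
          rw [LinearEquiv.apply_symm_apply]
        have h5 : B (F ⟨nn, hn⟩) (F u) = B nn (u : V) := hiso _ _
        show B nn (u : V) = 0
        rw [← h5, hFu]
        exact z.2 (F ⟨nn, hn⟩) (LinearMap.mem_range_self _ _)
      have hc1 : Module.finrank K (B.orthogonal (LinearMap.range F.toFun)) =
          Module.finrank K V - Module.finrank K F.domain := by
        rw [LinearMap.BilinForm.finrank_orthogonal hnd, hfr]
      have hc2 : Module.finrank K (B.orthogonal F.domain) =
          Module.finrank K V - Module.finrank K F.domain :=
        LinearMap.BilinForm.finrank_orthogonal hnd _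
      have hc3 : Module.finrank K (B.orthogonal (LinearMap.range F.toFun)) =
          Module.finrank K (LinearMap.range jmap) :=
        (LinearMap.finrank_range_of_inj hjinj).symm
      have hc4 : Module.finrank K (LinearMap.range jmap) ≤
          Module.finrank K (F.domain ⊓ B.orthogonal F.domain : Submodule K V) :=
        Submodule.finrank_mono hjrange
      have heq : F.domain ⊓ B.orthogonal F.domain = B.orthogonal F.domain := by
        apply eq_of_le_of_finrank_le inf_le_right
        omega
      rw [← heq] at hvperp
      exact hvnot hvperp.1
    obtain ⟨w, hw, hwR⟩ := hstep
    set F1 := F.supSpanSingleton v w hv with hF1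
    have hext : F ≤ F1 := F.left_le_sup _ _
    have hdom : F1.domain = F.domain ⊔ (K ∙ v) := F.domain_supSpanSingleton v w hv
    have hdec : ∀ z : F1.domain, ∃ (a : V) (ha : a ∈ F.domain) (c : K),
        (z : V) = a + c • v ∧ F1 z = F ⟨a, ha⟩ + c • w := by
      intro z
      have hz : (z : V) ∈ F.domain ⊔ (K ∙ v) := hdom ▸ z.2
      obtain ⟨a, ha, b, hb, hab⟩ := Submodule.mem_sup.mp hz
      obtain ⟨c, rfl⟩ := Submodule.mem_span_singleton.mp hb
      refine ⟨a, ha, c, hab.symm, ?_⟩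
      have hmem : a + c • v ∈ F1.domain := by rw [hab]; exact z.2
      have hzeq : z = ⟨a + c • v, hmem⟩ := Subtype.ext hab.symm
      rw [hzeq]
      exact F.supSpanSingleton_apply_mk v w hv a ha c
    have hinj1 : Function.Injective F1.toFun := by
      rw [← LinearMap.ker_eq_bot] at hinj ⊢
      rw [LinearMap.ker_eq_bot']
      intro z hz0
      obtain ⟨a, ha, c, hz, hFz⟩ := hdec z
      have hFz0 : F ⟨a, ha⟩ + c • w = 0 := by rw [← hFz]; exact hz0
      rcases eq_or_ne c 0 with rfl | hc
      · rw [zero_smul, add_zero] at hFz0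
        have ha0 : (⟨a, ha⟩ : F.domain) = 0 := by
          rw [LinearMap.ker_eq_bot] at hinj
          exact hinj (by simpa using hFz0)
        have : a = 0 := congrArg Subtype.val ha0
        apply Subtype.ext
        rw [hz, this, zero_smul, add_zero, Submodule.coe_zero]
      · exfalso
        apply hwR
        have hwv : w = (-c⁻¹) • (F ⟨a, ha⟩) := by
          have : c • w = -(F ⟨a, ha⟩) := by
            rw [eq_neg_iff_add_eq_zero, add_comm]; exact hFz0
          rw [neg_smul, ← smul_neg, ← this, smul_smul, inv_mul_cancel₀ hc, one_smul]
        rw [hwv]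
        exact Submodule.smul_mem _ _ (LinearMap.mem_range_self _ _)
    have hiso1 : ∀ a b : F1.domain, B (F1 a) (F1 b) = B (a : V) (b : V) := by
      intro z z'
      obtain ⟨a, ha, c, hz, hFz⟩ := hdec z
      obtain ⟨a', ha', c', hz', hFz'⟩ := hdec z'
      rw [hFz, hFz', hz, hz']
      have hfw : B (F ⟨a, ha⟩) w = B a v := by
        rw [← LinearMap.IsAlt.neg halt w (F ⟨a, ha⟩), hw ⟨a, ha⟩]
        exact LinearMap.IsAlt.neg halt v a
      simp only [map_add, map_smul, LinearMap.add_apply, LinearMap.smul_apply, smul_eq_mul]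
      rw [hiso ⟨a, ha⟩ ⟨a', ha'⟩, halt.self_eq_zero w, halt.self_eq_zero v,
          hw ⟨a', ha'⟩, hfw]
      try ring
    have hdim1 : Module.finrank K F1.domain = Module.finrank K F.domain + 1 := by
      rw [hdom]
      have hdisj : F.domain ⊓ (K ∙ v) = ⊥ := by
        rw [Submodule.eq_bot_iff]
        rintro x ⟨hx1, hx2⟩
        obtain ⟨c, rfl⟩ := Submodule.mem_span_singleton.mp hx2
        rcases eq_or_ne c 0 with rfl | hc
        · rw [zero_smul]
        · exfalso
          apply hv
          have : v = c⁻¹ • (c • v) := by rw [smul_smul, inv_mul_cancel₀ hc, one_smul]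
          rw [this]
          exact Submodule.smul_mem _ _ hx1
      have hv0 : v ≠ 0 := fun h => hv (h ▸ Submodule.zero_mem F.domain)
      have hsum := Submodule.finrank_sup_add_finrank_inf_eq F.domain (K ∙ v)
      rw [hdisj, finrank_bot, finrank_span_singleton hv0] at hsum
      omega
    have hle1 : Module.finrank K V - Module.finrank K F1.domain ≤ n := by omega
    obtain ⟨Ψ, hΨ1, hΨ2⟩ := ih F1 hle1 hinj1 hiso1
    refine ⟨Ψ, hΨ1, ?_⟩
    intro x
    have := hΨ2 ⟨(x : V), hext.1 x.2⟩
    rw [this]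
    exact (hext.2 rfl).symm

end WittAux


/-- Witt extension for the standard symplectic form over `ℤ/pℤ`. -/
theorem witt_extension_symplectic (p : ℕ) (hp : p.Prime) (g : ℕ) (hg : 0 < g)
    (G G' : Submodule (ZMod p) (Fin (2 * g) → ZMod p))
    (ψ : G ≃ₗ[ZMod p] G')
    (hψ : ∀ a b : G, symp g (ZMod p) ((ψ a : G') : Fin (2 * g) → ZMod p)
        ((ψ b : G') : Fin (2 * g) → ZMod p) = symp g (ZMod p) (a : Fin (2 * g) → ZMod p) b) :
    ∃ Ψ : (Fin (2 * g) → ZMod p) ≃ₗ[ZMod p] (Fin (2 * g) → ZMod p),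
      (∀ x y, symp g (ZMod p) (Ψ x) (Ψ y) = symp g (ZMod p) x y) ∧
      ∀ v : G, Ψ (v : Fin (2 * g) → ZMod p) = ((ψ v : G') : Fin (2 * g) → ZMod p) := by
  haveI : Fact p.Prime := ⟨hp⟩
  set B : LinearMap.BilinForm (ZMod p) (Fin (2 * g) → ZMod p) :=
    Matrix.toBilin' (sympJ g (ZMod p)) with hB
  have hsymp : ∀ x y, symp g (ZMod p) x y = B x y := fun x y => symp_eq_toBilin' g (ZMod p) x y
  set F : (Fin (2 * g) → ZMod p) →ₗ.[ZMod p] (Fin (2 * g) → ZMod p) :=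
    ⟨G, G'.subtype.comp ψ.toLinearMap⟩ with hF
  have hFapp : ∀ a : G, F a = ((ψ a : G') : Fin (2 * g) → ZMod p) := fun a => rfl
  have hFinj : Function.Injective F.toFun := by
    intro a b h
    exact ψ.injective (Subtype.val_injective h)
  have hFiso : ∀ a b : F.domain, B (F a) (F b) = B (a : Fin (2 * g) → ZMod p)
      (b : Fin (2 * g) → ZMod p) := by
    intro a b
    rw [← hsymp, ← hsymp]
    exact hψ a b
  obtain ⟨Ψ, h1, h2⟩ := witt_aux B (symp_isAlt g (ZMod p)) (symp_nondeg g (ZMod p))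
    (Module.finrank (ZMod p) (Fin (2 * g) → ZMod p)) F (Nat.sub_le _ _) hFinj hFiso
  exact ⟨Ψ, fun x y => by rw [hsymp, hsymp, h1], fun v => h2 v⟩
end

section
/- Let p be a prime, g a positive integer, and G a linear subspace of (Z/pZ)^{2g}. Then there exist integers r ≥ 0 and k with 0 ≤ k ≤ r, and vectors a_1, ..., a_r, b_1, ..., b_k ∈ Z^{2g} that are linearly independent over Z and satisfy, for the standard symplectic form on Z^{2g}, (a_i, a_j) = 0, (b_i, b_j) = 0, and (a_i, b_j) = δ_{ij}, such that the reductions modulo p of a_1, ..., a_r, b_1, ..., b_k generate G. -/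
open Finset

set_option linter.unreachableTactic false
set_option linter.unusedTactic false

section SympLemmas

variable {g : ℕ} {R : Type*} [CommRing R]

lemma sympJ_skew (i j : Fin (2*g)) : sympJ g R j i = - sympJ g R i j := by
  unfold sympJ
  split_ifs <;> first | (exfalso; omega) | ring1

lemma symp_zero_right (x : Fin (2*g) → R) : symp g R x 0 = 0 := by
  simp [symp]

lemma symp_add_right (x y z : Fin (2*g) → R) :
    symp g R x (y + z) = symp g R x y + symp g R x z := by
  simp only [symp, Pi.add_apply, mul_add, Finset.sum_add_distrib]

lemma symp_smul_right (x y : Fin (2*g) → R) (r : R) :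
    symp g R x (r • y) = r * symp g R x y := by
  simp only [symp, Pi.smul_apply, smul_eq_mul, Finset.mul_sum]
  exact Finset.sum_congr rfl fun i _ => Finset.sum_congr rfl fun j _ => by ring

lemma symp_neg_right (x y : Fin (2*g) → R) : symp g R x (-y) = - symp g R x y := by
  have := symp_smul_right x y (-1)
  simpa using this

lemma symp_sub_right (x y z : Fin (2*g) → R) :
    symp g R x (y - z) = symp g R x y - symp g R x z := by
  rw [sub_eq_add_neg, symp_add_right, symp_neg_right, sub_eq_add_neg]

lemma symp_sum_right {ι : Type*} (s : Finset ι) (x : Fin (2*g) → R) (f : ι → Fin (2*g) → R) :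
    symp g R x (∑ i ∈ s, f i) = ∑ i ∈ s, symp g R x (f i) := by
  classical
  induction s using Finset.induction_on with
  | empty => simpa using symp_zero_right x
  | insert _ _ h ih => rw [Finset.sum_insert h, Finset.sum_insert h, symp_add_right, ih]

lemma symp_skew (x y : Fin (2*g) → R) : symp g R x y = - symp g R y x := by
  have h : symp g R x y = ∑ i, ∑ j, -(y j * sympJ g R j i * x i) := by
    unfold symp
    exact Finset.sum_congr rfl fun i _ => Finset.sum_congr rfl fun j _ => by
      rw [sympJ_skew]; ring
  rw [h]
  simp only [Finset.sum_neg_distrib]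
  rw [Finset.sum_comm]
  rfl

lemma symp_self (x : Fin (2*g) → ℤ) : symp g ℤ x x = 0 := by
  have := symp_skew (R := ℤ) x x
  omega

lemma symp_neg_left (x y : Fin (2*g) → R) : symp g R (-x) y = - symp g R x y := by
  rw [symp_skew, symp_neg_right, symp_skew x y]; try ring

lemma sympJ_cast (p : ℕ) (i j : Fin (2*g)) :
    ((sympJ g ℤ i j : ℤ) : ZMod p) = sympJ g (ZMod p) i j := by
  unfold sympJ
  split_ifs <;> simp

lemma symp_cast (p : ℕ) (x y : Fin (2*g) → ℤ) :
    ((symp g ℤ x y : ℤ) : ZMod p)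
      = symp g (ZMod p) (fun t => ((x t : ℤ) : ZMod p)) (fun t => ((y t : ℤ) : ZMod p)) := by
  unfold symp
  push_cast
  exact Finset.sum_congr rfl fun i _ => Finset.sum_congr rfl fun j _ => by
    rw [sympJ_cast]

end SympLemmas

section Part2
variable {g : ℕ}

def rd (p : ℕ) {n : ℕ} (x : Fin n → ℤ) : Fin n → ZMod p := fun t => (x t : ZMod p)

lemma rd_add (p : ℕ) {n : ℕ} (x y : Fin n → ℤ) : rd p (x + y) = rd p x + rd p y := by
  funext t; simp [rd]

lemma rd_sub (p : ℕ) {n : ℕ} (x y : Fin n → ℤ) : rd p (x - y) = rd p x - rd p y := by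
  funext t; simp [rd]

lemma rd_smul (p : ℕ) {n : ℕ} (c : ℤ) (x : Fin n → ℤ) : rd p (c • x) = (c : ZMod p) • rd p x := by
  funext t; simp [rd]

lemma rd_sum (p : ℕ) {n : ℕ} {ι : Type*} (s : Finset ι) (f : ι → Fin n → ℤ) :
    rd p (∑ i ∈ s, f i) = ∑ i ∈ s, rd p (f i) := by
  funext t; simp [rd]

lemma rd_lift (p : ℕ) [NeZero p] {n : ℕ} (w : Fin n → ZMod p) :
    rd p (fun t => ((w t).val : ℤ)) = w := by
  funext t; simp [rd, ZMod.natCast_val, ZMod.cast_id]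

lemma symp_rd (p : ℕ) (x y : Fin (2*g) → ℤ) :
    symp g (ZMod p) (rd p x) (rd p y) = ((symp g ℤ x y : ℤ) : ZMod p) :=
  (symp_cast p x y).symm

/-- Bezout for finite families of integers. -/
lemma bezout {ι : Type*} [DecidableEq ι] (s : Finset ι) (v : ι → ℤ) :
    ∃ z : ι → ℤ, ∑ t ∈ s, z t * v t = s.gcd v := by
  induction s using Finset.induction_on with
  | empty => exact ⟨0, by simp⟩
  | @insert a s ha ih =>
    obtain ⟨z, hz⟩ := ih
    refine ⟨fun t => if t = a then Int.gcdA (v a) (s.gcd v)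
      else Int.gcdB (v a) (s.gcd v) * z t, ?_⟩
    simp only [Finset.sum_insert ha, Finset.gcd_insert]
    simp only [if_true]
    have h1 : ∑ t ∈ s, (if t = a then Int.gcdA (v a) (s.gcd v)
        else Int.gcdB (v a) (s.gcd v) * z t) * v t
        = Int.gcdB (v a) (s.gcd v) * ∑ t ∈ s, z t * v t := by
      rw [Finset.mul_sum]
      refine Finset.sum_congr rfl fun t ht => ?_
      rw [if_neg (by rintro rfl; exact ha ht)]; ring
    rw [h1, hz]
    have h2 : GCDMonoid.gcd (v a) (s.gcd v) = ↑(Int.gcd (v a) (s.gcd v)) := (Int.coe_gcd _ _).symm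
    rw [h2, Int.gcd_eq_gcd_ab]
    ring

/-- For a primitive integer vector, the symplectic pairing attains 1. -/
lemma exists_symp_one (hg : 0 < g) (v : Fin (2*g) → ℤ)
    (hv : Finset.univ.gcd v = 1) : ∃ z, symp g ℤ v z = 1 := by
  obtain ⟨z0, hz0⟩ := bezout Finset.univ v
  rw [hv] at hz0
  set σ : Fin (2*g) → Fin (2*g) := fun j => ⟨2*g-1-(j:ℕ), by omega⟩ with hσ
  have hσval : ∀ j : Fin (2*g), (σ j : ℕ) = 2*g-1-(j:ℕ) := fun j => rfl
  have hσσ : Function.Involutive σ := by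
    intro j; ext; simp only [hσval]; omega
  set ε : Fin (2*g) → ℤ := fun j => if ((σ j : ℕ)) < (j:ℕ) then 1 else -1 with hε
  refine ⟨fun j => ε j * z0 (σ j), ?_⟩
  have key : ∀ j : Fin (2*g), ∑ i, v i * sympJ g ℤ i j * (ε j * z0 (σ j))
      = v (σ j) * z0 (σ j) := by
    intro j
    have h2 : (σ j : ℕ) + (j:ℕ) = 2*g-1 := by simp only [hσval]; omega
    rw [Finset.sum_eq_single (σ j)]
    · by_cases h : (σ j : ℕ) < (j : ℕ)
      · have hε1 : ε j = 1 := if_pos h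
        unfold sympJ
        rw [if_pos ⟨h, h2⟩, hε1]; ring
      · have h3 : (j:ℕ) < (σ j : ℕ) := by omega
        have hε1 : ε j = -1 := if_neg h
        unfold sympJ
        rw [if_neg (by omega), if_pos ⟨h3, h2⟩, hε1]; ring
    · intro i _ hij
      have hns : ¬ ((i:ℕ) + (j:ℕ) = 2*g-1) := by
        intro hsum
        apply hij
        ext
        simp only [hσval]; omega
      unfold sympJ
      rw [if_neg (by tauto), if_neg (by tauto)]; ring
    · intro h; exact absurd (Finset.mem_univ _) h
  have hs : symp g ℤ v (fun j => ε j * z0 (σ j))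
      = ∑ j, ∑ i, v i * sympJ g ℤ i j * (ε j * z0 (σ j)) := by
    unfold symp; rw [Finset.sum_comm]
  rw [hs]
  calc (∑ j, ∑ i, v i * sympJ g ℤ i j * (ε j * z0 (σ j)))
      = ∑ j, v (σ j) * z0 (σ j) := Finset.sum_congr rfl fun j _ => key j
    _ = ∑ j, v j * z0 j := Function.Bijective.sum_comp hσσ.bijective (fun j => v j * z0 j)
    _ = 1 := by rw [← hz0]; exact Finset.sum_congr rfl fun t _ => mul_comm _ _

/-- A linear functional `symp v ·` over `ZMod p` vanishing on generators vanishes on the span. -/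
lemma symp_vanish_span (p : ℕ) (v : Fin (2*g) → ZMod p) (S : Set (Fin (2*g) → ZMod p))
    (h : ∀ s ∈ S, symp g (ZMod p) v s = 0) :
    ∀ u ∈ Submodule.span (ZMod p) S, symp g (ZMod p) v u = 0 := by
  intro u hu
  induction hu using Submodule.span_induction with
  | mem s hs => exact h s hs
  | zero => exact symp_zero_right v
  | add a b _ _ ha hb => rw [symp_add_right, ha, hb, add_zero]
  | smul c a _ ha => rw [symp_smul_right, ha, mul_zero]

/-- Orthogonal projection away from a partial symplectic family. -/
lemma proj_exists {ι : Type*} [Fintype ι] [DecidableEq ι] (x y : ι → Fin (2*g) → ℤ)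
    (hxx : ∀ i j, symp g ℤ (x i) (x j) = 0) (hyy : ∀ i j, symp g ℤ (y i) (y j) = 0)
    (hxy : ∀ i j, symp g ℤ (x i) (y j) = if i = j then 1 else 0) (w : Fin (2*g) → ℤ) :
    ∃ w', (∀ i, symp g ℤ (x i) w' = 0) ∧ (∀ i, symp g ℤ (y i) w' = 0) ∧
      (∀ u, (∀ i, symp g ℤ u (x i) = 0) → (∀ i, symp g ℤ u (y i) = 0) →
        symp g ℤ u w' = symp g ℤ u w) ∧
      (w' = w + (∑ i, symp g ℤ (y i) w • x i) - (∑ i, symp g ℤ (x i) w • y i)) := by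
  refine ⟨w + (∑ i, symp g ℤ (y i) w • x i) - (∑ i, symp g ℤ (x i) w • y i), ?_, ?_, ?_, rfl⟩
  · intro j
    rw [symp_sub_right, symp_add_right, symp_sum_right, symp_sum_right]
    have e1 : ∀ i, symp g ℤ (x j) (symp g ℤ (y i) w • x i) = 0 := fun i => by
      rw [symp_smul_right, hxx, mul_zero]
    have e2 : ∀ i, symp g ℤ (x j) (symp g ℤ (x i) w • y i)
        = (if j = i then 1 else 0) * symp g ℤ (x i) w := fun i => by
      rw [symp_smul_right, hxy]; ring
    rw [Finset.sum_congr rfl fun i _ => e1 i, Finset.sum_congr rfl fun i _ => e2 i]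
    simp
  · intro j
    rw [symp_sub_right, symp_add_right, symp_sum_right, symp_sum_right]
    have e1 : ∀ i, symp g ℤ (y j) (symp g ℤ (y i) w • x i)
        = -((if i = j then 1 else 0) * symp g ℤ (y i) w) := fun i => by
      rw [symp_smul_right, symp_skew (y j) (x i), hxy]; ring
    have e2 : ∀ i, symp g ℤ (y j) (symp g ℤ (x i) w • y i) = 0 := fun i => by
      rw [symp_smul_right, hyy, mul_zero]
    rw [Finset.sum_congr rfl fun i _ => e1 i, Finset.sum_congr rfl fun i _ => e2 i]
    simp
  · intro u hux huy
    rw [symp_sub_right, symp_add_right, symp_sum_right, symp_sum_right]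
    have e1 : ∀ i, symp g ℤ u (symp g ℤ (y i) w • x i) = 0 := fun i => by
      rw [symp_smul_right, hux, mul_zero]
    have e2 : ∀ i, symp g ℤ u (symp g ℤ (x i) w • y i) = 0 := fun i => by
      rw [symp_smul_right, huy, mul_zero]
    rw [Finset.sum_congr rfl fun i _ => e1 i, Finset.sum_congr rfl fun i _ => e2 i]
    simp

/-- A family admitting a symplectic dual family is linearly independent. -/
lemma li_of_dual {ι : Type*} [Fintype ι] [DecidableEq ι]
    (v w : ι → Fin (2*g) → ℤ)
    (h : ∀ i j, symp g ℤ (w i) (v j) = if i = j then 1 else 0) :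
    LinearIndependent ℤ v := by
  rw [Fintype.linearIndependent_iff]
  intro c hc i
  have h1 : symp g ℤ (w i) (∑ j, c j • v j) = 0 := by
    rw [hc]; exact symp_zero_right _
  rw [symp_sum_right] at h1
  have h2 : ∀ j, symp g ℤ (w i) (c j • v j) = c j * (if i = j then 1 else 0) := fun j => by
    rw [symp_smul_right, h]
  rw [Finset.sum_congr rfl fun j _ => h2 j] at h1
  simpa using h1

end Part2

section Part3

def SympInv (p g k m : ℕ) (G : Submodule (ZMod p) (Fin (2*g) → ZMod p))
    (x y : Fin k ⊕ Fin m → Fin (2*g) → ℤ) : Prop :=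
  (∀ i j, symp g ℤ (x i) (x j) = 0) ∧
  (∀ i j, symp g ℤ (y i) (y j) = 0) ∧
  (∀ i j, symp g ℤ (x i) (y j) = if i = j then 1 else 0) ∧
  (∀ i, rd p (x i) ∈ G) ∧
  (∀ i : Fin k, rd p (y (Sum.inl i)) ∈ G) ∧
  (∀ (i : Fin m), ∀ w ∈ G, symp g (ZMod p) (rd p (x (Sum.inr i))) w = 0)

def Spn (p g k m : ℕ) (x y : Fin k ⊕ Fin m → Fin (2*g) → ℤ) :
    Submodule (ZMod p) (Fin (2*g) → ZMod p) :=
  Submodule.span (ZMod p)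
    (Set.range (fun i => rd p (x i)) ∪ Set.range (fun i : Fin k => rd p (y (Sum.inl i))))

lemma Spn_le {p g k m : ℕ} {G : Submodule (ZMod p) (Fin (2*g) → ZMod p)}
    {x y : Fin k ⊕ Fin m → Fin (2*g) → ℤ} (hI : SympInv p g k m G x y) :
    Spn p g k m x y ≤ G := by
  obtain ⟨_, _, _, hx, hy, _⟩ := hI
  rw [Spn, Submodule.span_le]
  rintro u (⟨i, rfl⟩ | ⟨i, rfl⟩)
  exacts [hx i, hy i]

lemma proj_red {p g k m : ℕ} {G : Submodule (ZMod p) (Fin (2*g) → ZMod p)}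
    {x y : Fin k ⊕ Fin m → Fin (2*g) → ℤ} (hI : SympInv p g k m G x y)
    (w0 : Fin (2*g) → ℤ) (hw : rd p w0 ∈ G) :
    ∃ w', (∀ i, symp g ℤ (x i) w' = 0) ∧ (∀ i, symp g ℤ (y i) w' = 0) ∧
      (∀ u, (∀ i, symp g ℤ u (x i) = 0) → (∀ i, symp g ℤ u (y i) = 0) →
        symp g ℤ u w' = symp g ℤ u w0) ∧
      rd p w' - rd p w0 ∈ Spn p g k m x y := by
  obtain ⟨hxx, hyy, hxy, hxG, hyG, hrad⟩ := hI
  obtain ⟨w', h1, h2, h3, hdef⟩ := proj_exists x y hxx hyy hxy w0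
  refine ⟨w', h1, h2, h3, ?_⟩
  have hred : rd p w' = rd p w0 + (∑ i, ((symp g ℤ (y i) w0 : ℤ) : ZMod p) • rd p (x i))
      - ∑ i, ((symp g ℤ (x i) w0 : ℤ) : ZMod p) • rd p (y i) := by
    rw [hdef, rd_sub, rd_add, rd_sum, rd_sum]
    congr 1
    · congr 1
      exact Finset.sum_congr rfl fun i _ => rd_smul p _ _
    · exact Finset.sum_congr rfl fun i _ => rd_smul p _ _
  have hz : ∀ i : Fin m, ((symp g ℤ (x (Sum.inr i)) w0 : ℤ) : ZMod p) = 0 := fun i => by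
    rw [← symp_rd p]; exact hrad i (rd p w0) hw
  have hsplit : (∑ i, ((symp g ℤ (x i) w0 : ℤ) : ZMod p) • rd p (y i))
      = ∑ i : Fin k, ((symp g ℤ (x (Sum.inl i)) w0 : ℤ) : ZMod p) • rd p (y (Sum.inl i)) := by
    rw [Fintype.sum_sum_type]
    have h0 : (∑ i : Fin m, ((symp g ℤ (x (Sum.inr i)) w0 : ℤ) : ZMod p) • rd p (y (Sum.inr i)))
        = 0 := Finset.sum_eq_zero fun i _ => by rw [hz i, zero_smul]
    rw [h0, add_zero]
  rw [hred, hsplit]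
  have hmem1 : (∑ i, ((symp g ℤ (y i) w0 : ℤ) : ZMod p) • rd p (x i)) ∈ Spn p g k m x y :=
    Submodule.sum_mem _ fun i _ => Submodule.smul_mem _ _
      (Submodule.subset_span (Set.mem_union_left _ ⟨i, rfl⟩))
  have hmem2 : (∑ i : Fin k, ((symp g ℤ (x (Sum.inl i)) w0 : ℤ) : ZMod p)
      • rd p (y (Sum.inl i))) ∈ Spn p g k m x y :=
    Submodule.sum_mem _ fun i _ => Submodule.smul_mem _ _
      (Submodule.subset_span (Set.mem_union_right _ ⟨i, rfl⟩))
  have heq : rd p w0 + (∑ i, ((symp g ℤ (y i) w0 : ℤ) : ZMod p) • rd p (x i))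
      - (∑ i : Fin k, ((symp g ℤ (x (Sum.inl i)) w0 : ℤ) : ZMod p) • rd p (y (Sum.inl i)))
      - rd p w0
      = (∑ i, ((symp g ℤ (y i) w0 : ℤ) : ZMod p) • rd p (x i))
      - (∑ i : Fin k, ((symp g ℤ (x (Sum.inl i)) w0 : ℤ) : ZMod p) • rd p (y (Sum.inl i))) := by
    abel
  rw [heq]
  exact Submodule.sub_mem _ hmem1 hmem2

end Part3

section Part4

lemma extend {p g k m : ℕ} (hp : p.Prime) (hg : 0 < g)
    {G : Submodule (ZMod p) (Fin (2*g) → ZMod p)}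
    {x y : Fin k ⊕ Fin m → Fin (2*g) → ℤ} (hI : SympInv p g k m G x y)
    (w : Fin (2*g) → ZMod p) (hwG : w ∈ G) (hwS : w ∉ Spn p g k m x y) :
    ∃ (k' m' : ℕ) (x' y' : Fin k' ⊕ Fin m' → Fin (2*g) → ℤ),
      SympInv p g k' m' G x' y' ∧ Spn p g k m x y < Spn p g k' m' x' y' := by
  haveI := Fact.mk hp
  haveI : NeZero p := ⟨hp.ne_zero⟩
  obtain ⟨hxx, hyy, hxy, hxG, hyG, hrad⟩ := hI
  have hI' : SympInv p g k m G x y := ⟨hxx, hyy, hxy, hxG, hyG, hrad⟩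
  set w0 : Fin (2*g) → ℤ := fun t => ((w t).val : ℤ) with hw0
  have hrw0 : rd p w0 = w := rd_lift p w
  have hw0G : rd p w0 ∈ G := by rw [hrw0]; exact hwG
  obtain ⟨v1, hv1x, hv1y, hv1pair, hv1S⟩ := proj_red hI' w0 hw0G
  have hSle : Spn p g k m x y ≤ G := Spn_le hI'
  have hv1G : rd p v1 ∈ G := by
    have h := Submodule.add_mem G (hSle hv1S) hw0G
    simpa using h
  have hv1nS : rd p v1 ∉ Spn p g k m x y := by
    intro h
    apply hwS
    rw [← hrw0]
    have h2 := Submodule.sub_mem _ h hv1S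
    simpa using h2
  have hv1ne : rd p v1 ≠ 0 := fun h => hv1nS (h ▸ (Submodule.zero_mem _))
  have hne : (Finset.univ : Finset (Fin (2*g))).Nonempty := ⟨⟨0, by omega⟩, Finset.mem_univ _⟩
  obtain ⟨v2, hv12, hgcd1⟩ := Finset.extract_gcd v1 hne
  set d : ℤ := Finset.univ.gcd v1 with hd
  have hv1d : v1 = d • v2 := funext fun t => by
    rw [hv12 t (Finset.mem_univ t)]; rfl
  have hrdv : rd p v1 = (d : ZMod p) • rd p v2 := by rw [hv1d, rd_smul]
  have hD : (d : ZMod p) ≠ 0 := by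
    intro h; apply hv1ne; rw [hrdv, h, zero_smul]
  have hdz : d ≠ 0 := fun h => hD (by rw [h]; simp)
  have hrv2 : rd p v2 = ((d : ZMod p))⁻¹ • rd p v1 := by
    rw [hrdv, smul_smul, inv_mul_cancel₀ hD, one_smul]
  have hv2G : rd p v2 ∈ G := by rw [hrv2]; exact Submodule.smul_mem _ _ hv1G
  have hv2nS : rd p v2 ∉ Spn p g k m x y := by
    intro h
    exact hv1nS (by rw [hrdv]; exact Submodule.smul_mem _ _ h)
  have hv2x : ∀ i, symp g ℤ (x i) v2 = 0 := fun i => by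
    have h := hv1x i
    rw [hv1d, symp_smul_right] at h
    exact (mul_eq_zero.mp h).resolve_left hdz
  have hv2y : ∀ i, symp g ℤ (y i) v2 = 0 := fun i => by
    have h := hv1y i
    rw [hv1d, symp_smul_right] at h
    exact (mul_eq_zero.mp h).resolve_left hdz
  have hv2x' : ∀ i, symp g ℤ v2 (x i) = 0 := fun i => by
    rw [symp_skew, hv2x i, neg_zero]
  have hv2y' : ∀ i, symp g ℤ v2 (y i) = 0 := fun i => by
    rw [symp_skew, hv2y i, neg_zero]
  have hv2Spn : ∀ u ∈ Spn p g k m x y, symp g (ZMod p) (rd p v2) u = 0 := by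
    apply symp_vanish_span
    rintro s (⟨i, rfl⟩ | ⟨i, rfl⟩)
    · rw [symp_rd, hv2x' i]; simp
    · rw [symp_rd, hv2y' _]; simp
  obtain ⟨z0, hz0⟩ := exists_symp_one hg v2 hgcd1
  obtain ⟨z, hzx, hzy, hzpair, _⟩ := proj_exists x y hxx hyy hxy z0
  have hv2z : symp g ℤ v2 z = 1 := by rw [hzpair v2 hv2x' hv2y']; exact hz0
  by_cases hc : ∀ u ∈ G, symp g (ZMod p) (rd p v2) u = 0
  · -- Case B : radical extension, m grows
    set x' : Fin k ⊕ Fin (m+1) → Fin (2*g) → ℤ :=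
      Sum.elim (fun i : Fin k => x (Sum.inl i)) (Fin.snoc (fun i : Fin m => x (Sum.inr i)) v2)
      with hx'
    set y' : Fin k ⊕ Fin (m+1) → Fin (2*g) → ℤ :=
      Sum.elim (fun i : Fin k => y (Sum.inl i)) (Fin.snoc (fun i : Fin m => y (Sum.inr i)) z)
      with hy'
    set emb : Fin k ⊕ Fin m → Fin k ⊕ Fin (m+1) :=
      Sum.elim Sum.inl (fun a => Sum.inr a.castSucc) with hemb
    have hxe : ∀ i0, x' (emb i0) = x i0 := by
      rintro (i|i)
      · rfl
      · simp only [hx', hemb, Sum.elim_inr, Fin.snoc_castSucc]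
    have hye : ∀ i0, y' (emb i0) = y i0 := by
      rintro (i|i)
      · rfl
      · simp only [hy', hemb, Sum.elim_inr, Fin.snoc_castSucc]
    have hxl : x' (Sum.inr (Fin.last m)) = v2 := by
      simp only [hx', Sum.elim_inr, Fin.snoc_last]
    have hyl : y' (Sum.inr (Fin.last m)) = z := by
      simp only [hy', Sum.elim_inr, Fin.snoc_last]
    have hembinj : Function.Injective emb := by
      rintro (a|a) (b|b) h <;> simp only [hemb, Sum.elim_inl, Sum.elim_inr,
        Sum.inl.injEq, Sum.inr.injEq, Fin.castSucc_inj, reduceCtorEq] at h <;>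
        first | rw [h] | exact h.elim
    have hembne : ∀ i0, emb i0 ≠ Sum.inr (Fin.last m) := by
      rintro (a|a) h <;> simp only [hemb, Sum.elim_inl, Sum.elim_inr,
        Sum.inr.injEq, reduceCtorEq] at h
      exact absurd (congrArg Fin.val h) (by simpa using a.2.ne)
    have hcase : ∀ i : Fin k ⊕ Fin (m+1), (∃ i0, i = emb i0) ∨ i = Sum.inr (Fin.last m) := by
      rintro (i|i)
      · exact Or.inl ⟨Sum.inl i, rfl⟩
      · induction i using Fin.lastCases with
        | last => exact Or.inr rfl
        | cast j => exact Or.inl ⟨Sum.inr j, rfl⟩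
    have hInv' : SympInv p g k (m+1) G x' y' := by
      refine ⟨?_, ?_, ?_, ?_, ?_, ?_⟩
      · intro i j
        rcases hcase i with ⟨i0, rfl⟩ | rfl <;> rcases hcase j with ⟨j0, rfl⟩ | rfl
        · rw [hxe, hxe]; exact hxx i0 j0
        · rw [hxe, hxl]; exact hv2x i0
        · rw [hxl, hxe]; exact hv2x' j0
        · rw [hxl]; exact symp_self v2
      · intro i j
        rcases hcase i with ⟨i0, rfl⟩ | rfl <;> rcases hcase j with ⟨j0, rfl⟩ | rfl
        · rw [hye, hye]; exact hyy i0 j0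
        · rw [hye, hyl]; exact hzy i0
        · rw [hyl, hye]; rw [symp_skew, hzy j0, neg_zero]
        · rw [hyl]; exact symp_self z
      · intro i j
        rcases hcase i with ⟨i0, rfl⟩ | rfl <;> rcases hcase j with ⟨j0, rfl⟩ | rfl
        · rw [hxe, hye, hxy i0 j0]
          exact if_congr hembinj.eq_iff.symm rfl rfl
        · rw [hxe, hyl, if_neg (hembne i0), hzx i0]
        · rw [hxl, hye, if_neg (fun h => hembne j0 h.symm), hv2y' j0]
        · rw [hxl, hyl, if_pos rfl, hv2z]
      · intro i
        rcases hcase i with ⟨i0, rfl⟩ | rfl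
        · rw [hxe]; exact hxG i0
        · rw [hxl]; exact hv2G
      · intro i
        exact hyG i
      · intro i u huG
        induction i using Fin.lastCases with
        | last => rw [show x' (Sum.inr (Fin.last m)) = v2 from hxl]; exact hc u huG
        | cast j =>
          rw [show x' (Sum.inr j.castSucc) = x (Sum.inr j) from hxe (Sum.inr j)]
          exact hrad j u huG
    have hsub : (Set.range (fun i => rd p (x i))
          ∪ Set.range (fun i : Fin k => rd p (y (Sum.inl i))))
        ⊆ (Set.range (fun i => rd p (x' i))
          ∪ Set.range (fun i : Fin k => rd p (y' (Sum.inl i)))) := by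
      rintro u (⟨i, rfl⟩ | ⟨i, rfl⟩)
      · exact Set.mem_union_left _ ⟨emb i, by simp only [hxe]⟩
      · exact Set.mem_union_right _ ⟨i, rfl⟩
    have hle2 : Spn p g k m x y ≤ Spn p g k (m+1) x' y' := Submodule.span_mono hsub
    have hv2mem : rd p v2 ∈ Spn p g k (m+1) x' y' :=
      Submodule.subset_span (Set.mem_union_left _ ⟨Sum.inr (Fin.last m), by simp only [hxl]⟩)
    exact ⟨k, m+1, x', y', hInv',
      lt_of_le_of_ne hle2 (fun hEq => hv2nS (by rw [hEq]; exact hv2mem))⟩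
  · -- Case A : hyperbolic extension, k grows
    push_neg at hc
    obtain ⟨u, huG, hune⟩ := hc
    set u0 : Fin (2*g) → ZMod p := (symp g (ZMod p) (rd p v2) u)⁻¹ • u with hu0
    have hu0G : u0 ∈ G := Submodule.smul_mem _ _ huG
    have hpair0 : symp g (ZMod p) (rd p v2) u0 = 1 := by
      rw [hu0, symp_smul_right, inv_mul_cancel₀ hune]
    set uZ : Fin (2*g) → ℤ := fun t => ((u0 t).val : ℤ) with huZ
    have hruZ : rd p uZ = u0 := rd_lift p u0
    obtain ⟨u1, hu1x, hu1y, hu1pair, hu1S⟩ := proj_red hI' uZ (by rw [hruZ]; exact hu0G)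
    rw [hruZ] at hu1S
    have hv2u1cast : ((symp g ℤ v2 u1 : ℤ) : ZMod p) = 1 := by
      rw [← symp_rd p]
      have hdecomp : rd p u1 = u0 + (rd p u1 - u0) := by abel
      rw [hdecomp, symp_add_right, hpair0, hv2Spn _ hu1S, add_zero]
    have hdvd : (p:ℤ) ∣ (symp g ℤ v2 u1 - 1) := by
      apply (ZMod.intCast_zmod_eq_zero_iff_dvd _ _).mp
      rw [Int.cast_sub, hv2u1cast, Int.cast_one, sub_self]
    obtain ⟨mm, hmm⟩ := hdvd
    set u2 : Fin (2*g) → ℤ := u1 - ((p:ℤ) * mm) • z with hu2def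
    have hu2x : ∀ i, symp g ℤ (x i) u2 = 0 := fun i => by
      rw [hu2def, symp_sub_right, hu1x i, symp_smul_right, hzx i, mul_zero, sub_zero]
    have hu2y : ∀ i, symp g ℤ (y i) u2 = 0 := fun i => by
      rw [hu2def, symp_sub_right, hu1y i, symp_smul_right, hzy i, mul_zero, sub_zero]
    have hv2u2 : symp g ℤ v2 u2 = 1 := by
      rw [hu2def, symp_sub_right, symp_smul_right, hv2z, mul_one]
      omega
    have hcast0 : (((p:ℤ) * mm : ℤ) : ZMod p) = 0 := by
      push_cast
      simp [ZMod.natCast_self]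
    have hrdu2 : rd p u2 = rd p u1 := by
      rw [hu2def, rd_sub, rd_smul, hcast0, zero_smul, sub_zero]
    have hu2G : rd p u2 ∈ G := by
      rw [hrdu2]
      have h := Submodule.add_mem G (hSle hu1S) hu0G
      simpa using h
    set x' : Fin (k+1) ⊕ Fin m → Fin (2*g) → ℤ :=
      Sum.elim (Fin.snoc (fun i : Fin k => x (Sum.inl i)) v2) (fun i : Fin m => x (Sum.inr i))
      with hx'
    set y' : Fin (k+1) ⊕ Fin m → Fin (2*g) → ℤ :=
      Sum.elim (Fin.snoc (fun i : Fin k => y (Sum.inl i)) u2) (fun i : Fin m => y (Sum.inr i))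
      with hy'
    set emb : Fin k ⊕ Fin m → Fin (k+1) ⊕ Fin m :=
      Sum.elim (fun a => Sum.inl a.castSucc) Sum.inr with hemb
    have hxe : ∀ i0, x' (emb i0) = x i0 := by
      rintro (i|i)
      · simp only [hx', hemb, Sum.elim_inl, Fin.snoc_castSucc]
      · rfl
    have hye : ∀ i0, y' (emb i0) = y i0 := by
      rintro (i|i)
      · simp only [hy', hemb, Sum.elim_inl, Fin.snoc_castSucc]
      · rfl
    have hxl : x' (Sum.inl (Fin.last k)) = v2 := by
      simp only [hx', Sum.elim_inl, Fin.snoc_last]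
    have hyl : y' (Sum.inl (Fin.last k)) = u2 := by
      simp only [hy', Sum.elim_inl, Fin.snoc_last]
    have hembinj : Function.Injective emb := by
      rintro (a|a) (b|b) h <;> simp only [hemb, Sum.elim_inl, Sum.elim_inr,
        Sum.inl.injEq, Sum.inr.injEq, Fin.castSucc_inj, reduceCtorEq] at h <;>
        first | rw [h] | exact h.elim
    have hembne : ∀ i0, emb i0 ≠ Sum.inl (Fin.last k) := by
      rintro (a|a) h <;> simp only [hemb, Sum.elim_inl, Sum.elim_inr,
        Sum.inl.injEq, reduceCtorEq] at h
      exact absurd (congrArg Fin.val h) (by simpa using a.2.ne)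
    have hcase : ∀ i : Fin (k+1) ⊕ Fin m, (∃ i0, i = emb i0) ∨ i = Sum.inl (Fin.last k) := by
      rintro (i|i)
      · induction i using Fin.lastCases with
        | last => exact Or.inr rfl
        | cast j => exact Or.inl ⟨Sum.inl j, rfl⟩
      · exact Or.inl ⟨Sum.inr i, rfl⟩
    have hInv' : SympInv p g (k+1) m G x' y' := by
      refine ⟨?_, ?_, ?_, ?_, ?_, ?_⟩
      · intro i j
        rcases hcase i with ⟨i0, rfl⟩ | rfl <;> rcases hcase j with ⟨j0, rfl⟩ | rfl
        · rw [hxe, hxe]; exact hxx i0 j0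
        · rw [hxe, hxl]; exact hv2x i0
        · rw [hxl, hxe]; exact hv2x' j0
        · rw [hxl]; exact symp_self v2
      · intro i j
        rcases hcase i with ⟨i0, rfl⟩ | rfl <;> rcases hcase j with ⟨j0, rfl⟩ | rfl
        · rw [hye, hye]; exact hyy i0 j0
        · rw [hye, hyl]; exact hu2y i0
        · rw [hyl, hye]; rw [symp_skew, hu2y j0, neg_zero]
        · rw [hyl]; exact symp_self u2
      · intro i j
        rcases hcase i with ⟨i0, rfl⟩ | rfl <;> rcases hcase j with ⟨j0, rfl⟩ | rfl
        · rw [hxe, hye, hxy i0 j0]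
          exact if_congr hembinj.eq_iff.symm rfl rfl
        · rw [hxe, hyl, if_neg (hembne i0), hu2x i0]
        · rw [hxl, hye, if_neg (fun h => hembne j0 h.symm), hv2y' j0]
        · rw [hxl, hyl, if_pos rfl, hv2u2]
      · intro i
        rcases hcase i with ⟨i0, rfl⟩ | rfl
        · rw [hxe]; exact hxG i0
        · rw [hxl]; exact hv2G
      · intro i
        induction i using Fin.lastCases with
        | last => rw [show y' (Sum.inl (Fin.last k)) = u2 from hyl]; exact hu2G
        | cast j =>
          rw [show y' (Sum.inl j.castSucc) = y (Sum.inl j) from hye (Sum.inl j)]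
          exact hyG j
      · intro i u' hu'G
        rw [show x' (Sum.inr i) = x (Sum.inr i) from hxe (Sum.inr i)]
        exact hrad i u' hu'G
    have hsub : (Set.range (fun i => rd p (x i))
          ∪ Set.range (fun i : Fin k => rd p (y (Sum.inl i))))
        ⊆ (Set.range (fun i => rd p (x' i))
          ∪ Set.range (fun i : Fin (k+1) => rd p (y' (Sum.inl i)))) := by
      rintro u' (⟨i, rfl⟩ | ⟨i, rfl⟩)
      · exact Set.mem_union_left _ ⟨emb i, by simp only [hxe]⟩
      · have hyeS : y' (Sum.inl i.castSucc) = y (Sum.inl i) := hye (Sum.inl i)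
        exact Set.mem_union_right _ ⟨i.castSucc, by simp only [hyeS]⟩
    have hle2 : Spn p g k m x y ≤ Spn p g (k+1) m x' y' := Submodule.span_mono hsub
    have hv2mem : rd p v2 ∈ Spn p g (k+1) m x' y' :=
      Submodule.subset_span (Set.mem_union_left _ ⟨Sum.inl (Fin.last k), by simp only [hxl]⟩)
    exact ⟨k+1, m, x', y', hInv',
      lt_of_le_of_ne hle2 (fun hEq => hv2nS (by rw [hEq]; exact hv2mem))⟩

end Part4

section Part5

lemma build (p : ℕ) (hp : p.Prime) (g : ℕ) (hg : 0 < g)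
    (G : Submodule (ZMod p) (Fin (2*g) → ZMod p)) :
    ∃ (k m : ℕ) (x y : Fin k ⊕ Fin m → Fin (2*g) → ℤ),
      SympInv p g k m G x y ∧ Spn p g k m x y = G := by
  haveI := Fact.mk hp
  suffices H : ∀ (d k m : ℕ) (x y : Fin k ⊕ Fin m → Fin (2*g) → ℤ),
      SympInv p g k m G x y →
      Module.finrank (ZMod p) G ≤ Module.finrank (ZMod p) (Spn p g k m x y) + d →
      ∃ (k' m' : ℕ) (x' y' : Fin k' ⊕ Fin m' → Fin (2*g) → ℤ),
        SympInv p g k' m' G x' y' ∧ Spn p g k' m' x' y' = G by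
    refine H (Module.finrank (ZMod p) G) 0 0
      (Sum.elim Fin.elim0 Fin.elim0) (Sum.elim Fin.elim0 Fin.elim0) ?_ ?_
    · refine ⟨?_, ?_, ?_, ?_, ?_, ?_⟩
      · rintro (i|i) <;> exact i.elim0
      · rintro (i|i) <;> exact i.elim0
      · rintro (i|i) <;> exact i.elim0
      · rintro (i|i) <;> exact i.elim0
      · rintro i; exact i.elim0
      · rintro i; exact i.elim0
    · exact Nat.le_add_left _ _
  intro d
  induction d with
  | zero =>
    intro k m x y hI hle
    refine ⟨k, m, x, y, hI, ?_⟩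
    exact Submodule.eq_of_le_of_finrank_le (Spn_le hI) (by omega)
  | succ d ih =>
    intro k m x y hI hle
    by_cases hEq : Spn p g k m x y = G
    · exact ⟨k, m, x, y, hI, hEq⟩
    · obtain ⟨w, hwG, hwS⟩ := SetLike.exists_of_lt ((Spn_le hI).lt_of_ne hEq)
      obtain ⟨k', m', x', y', hI', hlt⟩ := extend hp hg hI w hwG hwS
      apply ih k' m' x' y' hI'
      have h1 := Submodule.finrank_lt_finrank_of_lt hlt
      have h2 := Submodule.finrank_mono (Spn_le hI')
      omega

end Part5


/-- every subspace of `(ℤ/pℤ)^{2g}` is generated by the reductions of a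
linearly independent partial symplectic family of integral vectors. -/
theorem subspace_generated_by_partial_symplectic_lift (p : ℕ) (hp : p.Prime)
    (g : ℕ) (hg : 0 < g)
    (G : Submodule (ZMod p) (Fin (2 * g) → ZMod p)) :
    ∃ (r k : ℕ), k ≤ r ∧
      ∃ (a : Fin r → Fin (2 * g) → ℤ) (b : Fin k → Fin (2 * g) → ℤ),
        LinearIndependent ℤ (Sum.elim a b) ∧
        (∀ i j, symp g ℤ (a i) (a j) = 0) ∧
        (∀ i j, symp g ℤ (b i) (b j) = 0) ∧
        (∀ (i : Fin r) (j : Fin k),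
          symp g ℤ (a i) (b j) = if (i : ℕ) = (j : ℕ) then 1 else 0) ∧
        Submodule.span (ZMod p)
          (Set.range fun i : Fin r ⊕ Fin k => fun t => ((Sum.elim a b i t : ℤ) : ZMod p)) = G := by
  haveI := Fact.mk hp
  obtain ⟨k, m, x, y, ⟨hxx, hyy, hxy, hxG, hyG, hrad⟩, hSpan⟩ := build p hp g hg G
  set A : Fin (k+m) → Fin (2*g) → ℤ := fun i => x (finSumFinEquiv.symm i) with hA
  set b : Fin k → Fin (2*g) → ℤ := fun j => y (Sum.inl j) with hb
  refine ⟨k + m, k, Nat.le_add_right k m, A, b, ?_, ?_, ?_, ?_, ?_⟩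
  · -- linear independence via dual family
    apply li_of_dual (Sum.elim A b)
      (Sum.elim (fun i => -(y (finSumFinEquiv.symm i))) (fun j => x (Sum.inl j)))
    rintro (i|i) (j|j)
    · show symp g ℤ (-(y (finSumFinEquiv.symm i))) (A j) = _
      rw [hA, symp_neg_left, symp_skew (y _) (x _), neg_neg, hxy]
      refine if_congr ?_ rfl rfl
      rw [finSumFinEquiv.symm.injective.eq_iff]
      constructor
      · intro h; rw [Sum.inl.injEq]; exact h.symm
      · intro h; rw [Sum.inl.injEq] at h; exact h.symm
    · show symp g ℤ (-(y (finSumFinEquiv.symm i))) (b j) = _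
      rw [hb, symp_neg_left, hyy, neg_zero, if_neg (by simp)]
    · show symp g ℤ (x (Sum.inl i)) (A j) = _
      rw [hA, hxx, if_neg (by simp)]
    · show symp g ℤ (x (Sum.inl i)) (b j) = _
      rw [hb, hxy]
      refine if_congr ?_ rfl rfl
      simp
  · intro i j
    exact hxx _ _
  · intro i j
    exact hyy _ _
  · intro i j
    obtain ⟨s, rfl⟩ := finSumFinEquiv.surjective i
    have hAs : A (finSumFinEquiv s) = x s := by simp only [hA, Equiv.symm_apply_apply]
    rw [hAs, hb]
    rcases s with s | s
    · rw [hxy (Sum.inl s) (Sum.inl j)]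
      refine if_congr ?_ rfl rfl
      simp [finSumFinEquiv_apply_left, Fin.ext_iff]
    · rw [hxy (Sum.inr s) (Sum.inl j), if_neg (by simp), if_neg ?_]
      have hj := j.2
      simp only [finSumFinEquiv_apply_right, Fin.coe_natAdd]
      omega
  · have hfun : (fun i : Fin (k+m) ⊕ Fin k => fun t => ((Sum.elim A b i t : ℤ) : ZMod p))
        = Sum.elim (fun i => rd p (A i)) (fun j => rd p (b j)) := by
      funext i; cases i <;> rfl
    rw [hfun, Set.Sum.elim_range]
    have h1 : Set.range (fun i : Fin (k+m) => rd p (A i))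
        = Set.range (fun s : Fin k ⊕ Fin m => rd p (x s)) :=
      Function.Surjective.range_comp finSumFinEquiv.symm.surjective (fun s => rd p (x s))
    rw [h1]
    exact hSpan
end
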